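/- If a policy π ∈ 𝒫 is ε-optimal at the state x ∈ S, then for each m ∈ ℕ, P_x^π[ J*(λ,X_m) ≤ J*(λ,x) + ε ] = 1. -/

import Mathlib

open scoped Classical BigOperators ENNReal

namespace RiskSensitive

/-- A (history-dependent, randomized) policy for a finite MDP: given the past
(chronological list of (state, action) pairs) and the current state, it assigns a
probability weight to each action, concentrated on the admissible actions. -/
structure Policy (S A : Type*) [Fintype S] [Fintype A] (Adm : S → Finset A) where
  toFun : List (S × A) → S → A → ℝ
  nonneg : ∀ h s a, 0 ≤ toFun h s a
  sum_one : ∀ h s, ∑ a, toFun h s a = 1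
  supp : ∀ h s a, a ∉ Adm s → toFun h s a = 0

variable {S A : Type*} [Fintype S] [Fintype A]
variable (Adm : S → Finset A) (p : S → A → S → ℝ) (C : S → A → ℝ) (lam : ℝ)

/-- Probability of a finite trajectory (list of (action, next-state) pairs), given the
history so far and the current state. -/
noncomputable def pathProbAux (π : Policy S A Adm) :
    List (S × A) → S → List (A × S) → ℝ
  | _, _, [] => 1
  | hist, x, (a, y) :: rest =>
      π.toFun hist x a * p x a y * pathProbAux π (hist ++ [(x, a)]) y rest

/-- `pathProb π x l` is `P_x^π[A_0 = a_0, X_1 = y_1, …]` for `l = [(a_0,y_1),…]`. -/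
noncomputable def pathProb (π : Policy S A Adm) (x : S) (l : List (A × S)) : ℝ :=
  pathProbAux Adm p π [] x l

/-- Probability of a cylinder event depending on the first `n` (action, next-state) pairs. -/
noncomputable def cylProb (π : Policy S A Adm) (x : S) (n : ℕ)
    (E : (Fin n → A × S) → Prop) : ℝ :=
  ∑ v : Fin n → A × S, if E v then pathProb Adm p π x (List.ofFn v) else 0

/-- The state `X_t` along the trajectory encoded by `l`, starting from `x`. -/
def stateAt (x : S) (l : List (A × S)) (t : ℕ) : S :=
  (l.take t).foldl (fun _ q => q.2) x

/-- The final state of the finite trajectory `l` started at `x`. -/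
def lastState (x : S) (l : List (A × S)) : S :=
  l.foldl (fun _ q => q.2) x

/-- `Σ_t w(X_t, A_t)` along the finite trajectory `l` started at `x`. -/
def costSum (w : S → A → ℝ) : S → List (A × S) → ℝ
  | _, [] => 0
  | x, (a, y) :: rest => w x a + costSum w y rest

/-- `J_n(λ,π,x) = (1/λ) log E_x^π[exp(λ Σ_{t<n} C(X_t,A_t))]`. -/
noncomputable def Jn (π : Policy S A Adm) (x : S) (n : ℕ) : ℝ :=
  (1 / lam) * Real.log (∑ v : Fin n → A × S,
    pathProb Adm p π x (List.ofFn v) * Real.exp (lam * costSum C x (List.ofFn v)))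

/-- The risk-sensitive average cost `J(λ,π,x) = limsup_n J_n(λ,π,x)/n`. -/
noncomputable def Javg (π : Policy S A Adm) (x : S) : ℝ :=
  Filter.limsup (fun n : ℕ => Jn Adm p C lam π x n / n) Filter.atTop

/-- Optimal risk-sensitive average cost `J*(λ,x)`. -/
noncomputable def Jopt (x : S) : ℝ :=
  ⨅ π : Policy S A Adm, Javg Adm p C lam π x

/-- `π` is `ε`-optimal at `x`. -/
def EpsOptimalAt (π : Policy S A Adm) (x : S) (ε : ℝ) : Prop :=
  Javg Adm p C lam π x ≤ Jopt Adm p C lam x + ε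

/-- `FirstExit Q v` : the trajectory `v` leaves `{Q}` for the first time exactly at its
last step, i.e. the exit time of `Q` equals `n`. -/
def FirstExit (Q : S → Prop) {n : ℕ} (v : Fin n → A × S) : Prop :=
  0 < n ∧ (∀ t : Fin n, (t : ℕ) + 1 < n → Q (v t).2) ∧
    ∀ t : Fin n, (t : ℕ) + 1 = n → ¬ Q (v t).2

/-- `E_x^π[ exp(Σ_{t<τ} w(X_t,A_t)) ]` where `τ = min{n ≥ 1 : ¬ Q (X_n)}` is the first
exit time from `Q` (the contribution of `[τ = ∞]` is null when `τ < ∞` a.s.). -/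
noncomputable def EexitExp (π : Policy S A Adm) (x : S) (Q : S → Prop)
    (w : S → A → ℝ) : ℝ≥0∞ :=
  ∑' n : ℕ, ∑ v : Fin n → A × S,
    if FirstExit Q v then
      ENNReal.ofReal (pathProb Adm p π x (List.ofFn v) *
        Real.exp (costSum w x (List.ofFn v)))
    else 0

/-- `E_x^π[ exp(Σ_{t<T} w(X_t,A_t)) ]` with `T` the first positive arrival time to `z`. -/
noncomputable def EhitExp (π : Policy S A Adm) (x z : S) (w : S → A → ℝ) : ℝ≥0∞ :=
  EexitExp Adm p π x (fun y => y ≠ z) w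

/-- `E_x^π[T]`, the expected first positive arrival time to `z`, computed as
`Σ_{n≥0} P_x^π[T > n]`. -/
noncomputable def ExpT (π : Policy S A Adm) (x z : S) : ℝ≥0∞ :=
  ∑' n : ℕ, ENNReal.ofReal
    (cylProb Adm p π x n (fun v => ∀ t : Fin n, (v t).2 ≠ z))

/-- `P_x^π[T > n]`, the probability that `z` is not visited during the first `n` steps. -/
noncomputable def survProb (π : Policy S A Adm) (x z : S) (n : ℕ) : ℝ :=
  cylProb Adm p π x n (fun v => ∀ t : Fin n, (v t).2 ≠ z)

/-- The stationary policy induced by a choice function `f ∈ 𝔽`. -/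
noncomputable def stationary (f : S → A) (hf : ∀ s, f s ∈ Adm s) : Policy S A Adm where
  toFun := fun _ s a => if a = f s then 1 else 0
  nonneg := by intro h s a; (try dsimp only); split <;> norm_num
  sum_one := by intro h s; simp
  supp := by
    intro h s a ha
    try dsimp only
    rw [if_neg]
    intro hEq
    exact ha (hEq ▸ hf s)

/-- The simultaneous Doeblin condition: `E_x^f[T] ≤ M` for every state `x` and every
stationary policy `f`, where `T` is the first positive arrival time to `z`. -/
def Doeblin (z : S) (M : ℝ) : Prop :=
  0 < M ∧ ∀ (x : S) (f : S → A) (hf : ∀ s, f s ∈ Adm s),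
    ExpT Adm p (stationary Adm f hf) x z ≤ ENNReal.ofReal M

/-- `B_g(x) = {a ∈ A(x) : g(x) = max{g(y) : p_{xy}(a) > 0}}`. -/
def Bg (g : S → ℝ) (x : S) : Set A :=
  {a | a ∈ Adm x ∧ g x = sSup (g '' {y | 0 < p x a y})}

/-- The family `𝒢` of functions characterizing `J*(λ,·)`. -/
def Gclass : Set (S → ℝ) :=
  {g | (∀ x, g x = sInf ((fun a => sSup (g '' {y | 0 < p x a y})) '' (Adm x : Set A))) ∧
    ∃ h : S → ℝ, ∀ x,
      sInf ((fun a => Real.exp (lam * C x a) * ∑ y, p x a y * Real.exp (lam * h y)) ''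
        Bg Adm p g x) ≤ Real.exp (lam * g x + lam * h x)}

/-- The class `𝒫*` of policies which always select actions in `B*(X_t)`. -/
def Pstar : Set (Policy S A Adm) :=
  {π | ∀ (x : S) (t : ℕ),
    cylProb Adm p π x (t + 1)
      (fun v => (v (Fin.last t)).1 ∈
        Bg Adm p (Jopt Adm p C lam) (stateAt x (List.ofFn v) t)) = 1}

/-- The deviation function
`h(x) = inf_{π ∈ 𝒫*} (1/λ) log E_x^π[exp(λα Σ_{t<T}(C(X_t,A_t) − J*(λ,X_t)))]`. -/
noncomputable def hdev (z : S) (α : ℝ) (x : S) : EReal :=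
  ⨅ π ∈ Pstar Adm p C lam, ((lam⁻¹ : ℝ) : EReal) *
    ENNReal.log (EhitExp Adm p π x z
      (fun s a => lam * α * (C s a - Jopt Adm p C lam s)))

/-- `ψ(ε) = (1/λ) inf_{δ∈𝒫*} log E_z^δ[exp(λ Σ_{t<T}(C(X_t,A_t) − γ₀ − 2ε))]`. -/
noncomputable def psi (z : S) (ε : ℝ) : EReal :=
  ((lam⁻¹ : ℝ) : EReal) * ⨅ π ∈ Pstar Adm p C lam,
    ENNReal.log (EhitExp Adm p π z z
      (fun s a => lam * (C s a - Jopt Adm p C lam z - 2 * ε)))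

/-- `ξ₀ = −(1−α) log β / (λα)`. -/
noncomputable def xi0 (α β : ℝ) : ℝ := -((1 - α) * Real.log β) / (lam * α)

/-- `ξ₁`: 1 if `J*(λ,·)` is constant, otherwise the minimum gap between distinct
values of `J*(λ,·)`. -/
noncomputable def xi1 : ℝ :=
  if ∀ u v : S, Jopt Adm p C lam u = Jopt Adm p C lam v then 1
  else sInf {d | ∃ u v : S, Jopt Adm p C lam u < Jopt Adm p C lam v ∧
    d = Jopt Adm p C lam v - Jopt Adm p C lam u}

/-- `ξ = min{ξ₀, ξ₁}`. -/
noncomputable def xi (α β : ℝ) : ℝ := min (xi0 lam α β) (xi1 Adm p C lam)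

/-- The shifted policy obtained by prefixing the fixed history `pre`. -/
def shiftPolicy (π : Policy S A Adm) (pre : List (S × A)) : Policy S A Adm where
  toFun := fun h s a => π.toFun (pre ++ h) s a
  nonneg := fun h s a => π.nonneg _ s a
  sum_one := fun h s => π.sum_one _ s
  supp := fun h s a ha => π.supp _ s a ha

/-- The history (list of (state, action) pairs) along the trajectory `l` started at `x`. -/
def histOf : S → List (A × S) → List (S × A)
  | _, [] => []
  | x, (a, y) :: rest => (x, a) :: histOf y rest


section AuxProofs

lemma shiftPolicy_toFun (π : Policy S A Adm) (pre h : List (S × A)) (s : S) (a : A) :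
    (shiftPolicy Adm π pre).toFun h s a = π.toFun (pre ++ h) s a := rfl

lemma lastState_cons (x : S) (a : A) (y : S) (rest : List (A × S)) :
    lastState x ((a, y) :: rest) = lastState y rest := rfl

lemma histOf_cons (x : S) (a : A) (y : S) (rest : List (A × S)) :
    histOf x ((a, y) :: rest) = (x, a) :: histOf y rest := rfl

lemma pathProbAux_nonneg
    (hp : ∀ (x : S), ∀ a ∈ Adm x, (∀ y, 0 ≤ p x a y) ∧ (∑ y, p x a y) = 1)
    (π : Policy S A Adm) (l : List (A × S)) :
    ∀ (hist : List (S × A)) (x : S), 0 ≤ pathProbAux Adm p π hist x l := by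
  induction l with
  | nil => intro hist x; simp [pathProbAux]
  | cons q rest ih =>
    intro hist x
    obtain ⟨a, y⟩ := q
    by_cases h : a ∈ Adm x
    · exact mul_nonneg (mul_nonneg (π.nonneg _ _ _) ((hp x a h).1 y)) (ih _ _)
    · simp [pathProbAux, π.supp hist x a h]

lemma sum_ofFn_succ {β : Type*} [Fintype β] (n : ℕ) (F : List β → ℝ) :
    ∑ v : Fin (n + 1) → β, F (List.ofFn v) =
      ∑ q : β, ∑ w : Fin n → β, F (q :: List.ofFn w) := by
  have h := Fintype.sum_equiv (Fin.consEquiv fun _ : Fin (n + 1) => β)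
    (fun qw => F (qw.1 :: List.ofFn qw.2)) (fun v => F (List.ofFn v))
    (fun qw => by simp [Fin.consEquiv, List.ofFn_succ])
  rw [← h, Fintype.sum_prod_type]

lemma pathProbAux_sum_one
    (hp : ∀ (x : S), ∀ a ∈ Adm x, (∀ y, 0 ≤ p x a y) ∧ (∑ y, p x a y) = 1)
    (π : Policy S A Adm) :
    ∀ (n : ℕ) (hist : List (S × A)) (x : S),
      ∑ v : Fin n → A × S, pathProbAux Adm p π hist x (List.ofFn v) = 1 := by
  intro n
  induction n with
  | zero =>
    intro hist x
    simp [pathProbAux, List.ofFn_zero]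
  | succ n ih =>
    intro hist x
    rw [sum_ofFn_succ]
    have h1 : ∀ q : A × S,
        ∑ w : Fin n → A × S, pathProbAux Adm p π hist x (q :: List.ofFn w)
          = π.toFun hist x q.1 * p x q.1 q.2 := by
      rintro ⟨a, y⟩
      simp only [pathProbAux]
      rw [← Finset.mul_sum, ih, mul_one]
    rw [Finset.sum_congr rfl fun q _ => h1 q, Fintype.sum_prod_type]
    have h2 : ∀ a : A, ∑ y : S, π.toFun hist x a * p x a y = π.toFun hist x a := by
      intro a
      rw [← Finset.mul_sum]
      by_cases h : a ∈ Adm x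
      · rw [(hp x a h).2, mul_one]
      · rw [π.supp hist x a h, zero_mul]
    rw [Finset.sum_congr rfl fun a _ => h2 a]
    exact π.sum_one hist x

lemma pathProbAux_append (π : Policy S A Adm) (l1 : List (A × S)) :
    ∀ (l2 : List (A × S)) (hist : List (S × A)) (x : S),
      pathProbAux Adm p π hist x (l1 ++ l2) =
        pathProbAux Adm p π hist x l1 *
          pathProbAux Adm p π (hist ++ histOf x l1) (lastState x l1) l2 := by
  induction l1 with
  | nil => intro l2 hist x; simp [pathProbAux, histOf, lastState]
  | cons q rest ih =>
    intro l2 hist x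
    obtain ⟨a, y⟩ := q
    simp only [List.cons_append, List.append_eq, pathProbAux, histOf_cons, lastState_cons]
    rw [ih, List.append_cons hist (x, a) (histOf y rest)]
    ring

lemma pathProbAux_shift (π : Policy S A Adm) (pre : List (S × A)) (l : List (A × S)) :
    ∀ (h : List (S × A)) (x : S),
      pathProbAux Adm p (shiftPolicy Adm π pre) h x l
        = pathProbAux Adm p π (pre ++ h) x l := by
  induction l with
  | nil => intro h x; simp [pathProbAux]
  | cons q rest ih =>
    intro h x
    obtain ⟨a, y⟩ := q
    simp only [pathProbAux, shiftPolicy_toFun]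
    rw [ih, List.append_assoc]

lemma costSum_append (w : S → A → ℝ) (l1 : List (A × S)) :
    ∀ (l2 : List (A × S)) (x : S),
      costSum w x (l1 ++ l2) = costSum w x l1 + costSum w (lastState x l1) l2 := by
  induction l1 with
  | nil => intro l2 x; simp [costSum, lastState]
  | cons q rest ih =>
    intro l2 x
    obtain ⟨a, y⟩ := q
    simp only [List.cons_append, List.append_eq, costSum, lastState_cons]
    rw [ih]
    ring

lemma abs_costSum_le {M : ℝ} (hM : ∀ s a, |C s a| ≤ M) (l : List (A × S)) :
    ∀ x : S, |costSum C x l| ≤ l.length * M := by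
  induction l with
  | nil => intro x; simp [costSum]
  | cons q rest ih =>
    intro x
    obtain ⟨a, y⟩ := q
    simp only [costSum, List.length_cons]
    push_cast
    calc |C x a + costSum C y rest| ≤ |C x a| + |costSum C y rest| := abs_add_le _ _
      _ ≤ M + (rest.length : ℝ) * M := add_le_add (hM x a) (ih y)
      _ = ((rest.length : ℝ) + 1) * M := by ring

lemma stateAt_ofFn (x : S) {m : ℕ} (v : Fin m → A × S) :
    stateAt x (List.ofFn v) m = lastState x (List.ofFn v) := by
  unfold stateAt lastState
  rw [List.take_of_length_le (by simp)]

end AuxProofs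

section Bounds

/-- The expectation appearing in `Jn`. -/
noncomputable def Eexp (π : Policy S A Adm) (z : S) (n : ℕ) : ℝ :=
  ∑ v : Fin n → A × S,
    pathProb Adm p π z (List.ofFn v) * Real.exp (lam * costSum C z (List.ofFn v))

lemma Jn_eq_Eexp (π : Policy S A Adm) (z : S) (n : ℕ) :
    Jn Adm p C lam π z n = (1 / lam) * Real.log (Eexp Adm p C lam π z n) := rfl

lemma Eexp_bounds
    (hp : ∀ (x : S), ∀ a ∈ Adm x, (∀ y, 0 ≤ p x a y) ∧ (∑ y, p x a y) = 1)
    (hlam : 0 < lam) {M : ℝ} (hM : ∀ s a, |C s a| ≤ M)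
    (π : Policy S A Adm) (z : S) (n : ℕ) :
    Real.exp (-(lam * (n * M))) ≤ Eexp Adm p C lam π z n ∧
      Eexp Adm p C lam π z n ≤ Real.exp (lam * (n * M)) := by
  have hnn : ∀ v : Fin n → A × S, 0 ≤ pathProb Adm p π z (List.ofFn v) :=
    fun v => pathProbAux_nonneg Adm p hp π (List.ofFn v) [] z
  have hsum : ∑ v : Fin n → A × S, pathProb Adm p π z (List.ofFn v) = 1 :=
    pathProbAux_sum_one Adm p hp π n [] z
  have hcb : ∀ v : Fin n → A × S, |costSum C z (List.ofFn v)| ≤ (n : ℝ) * M := by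
    intro v
    simpa using abs_costSum_le C hM (List.ofFn v) z
  constructor
  · calc Real.exp (-(lam * (n * M)))
        = ∑ v : Fin n → A × S,
            pathProb Adm p π z (List.ofFn v) * Real.exp (-(lam * (n * M))) := by
          rw [← Finset.sum_mul, hsum, one_mul]
      _ ≤ Eexp Adm p C lam π z n := by
          refine Finset.sum_le_sum fun v _ => mul_le_mul_of_nonneg_left ?_ (hnn v)
          refine Real.exp_le_exp.2 ?_
          have h := (abs_le.1 (hcb v)).1
          nlinarith [hlam.le]
  · calc Eexp Adm p C lam π z n
        ≤ ∑ v : Fin n → A × S,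
            pathProb Adm p π z (List.ofFn v) * Real.exp (lam * (n * M)) := by
          refine Finset.sum_le_sum fun v _ => mul_le_mul_of_nonneg_left ?_ (hnn v)
          refine Real.exp_le_exp.2 ?_
          have h := (abs_le.1 (hcb v)).2
          nlinarith [hlam.le]
      _ = Real.exp (lam * (n * M)) := by rw [← Finset.sum_mul, hsum, one_mul]

lemma Eexp_pos
    (hp : ∀ (x : S), ∀ a ∈ Adm x, (∀ y, 0 ≤ p x a y) ∧ (∑ y, p x a y) = 1)
    (hlam : 0 < lam) {M : ℝ} (hM : ∀ s a, |C s a| ≤ M)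
    (π : Policy S A Adm) (z : S) (n : ℕ) : 0 < Eexp Adm p C lam π z n :=
  (Real.exp_pos _).trans_le (Eexp_bounds Adm p C lam hp hlam hM π z n).1

lemma abs_Jn_le
    (hp : ∀ (x : S), ∀ a ∈ Adm x, (∀ y, 0 ≤ p x a y) ∧ (∑ y, p x a y) = 1)
    (hlam : 0 < lam) {M : ℝ} (hM : ∀ s a, |C s a| ≤ M)
    (π : Policy S A Adm) (z : S) (n : ℕ) :
    |Jn Adm p C lam π z n| ≤ (n : ℝ) * M := by
  obtain ⟨hlo, hhi⟩ := Eexp_bounds Adm p C lam hp hlam hM π z n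
  have hpos := Eexp_pos Adm p C lam hp hlam hM π z n
  have hlog : |Real.log (Eexp Adm p C lam π z n)| ≤ lam * ((n : ℝ) * M) := by
    refine abs_le.2 ⟨?_, ?_⟩
    · exact (Real.le_log_iff_exp_le hpos).2 (by exact_mod_cast hlo)
    · exact (Real.log_le_iff_le_exp hpos).2 (by exact_mod_cast hhi)
  rw [Jn_eq_Eexp, abs_mul, abs_of_pos (by positivity : (0:ℝ) < 1 / lam)]
  calc (1 / lam) * |Real.log (Eexp Adm p C lam π z n)|
      ≤ (1 / lam) * (lam * ((n : ℝ) * M)) :=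
        mul_le_mul_of_nonneg_left hlog (by positivity)
    _ = (n : ℝ) * M := by field_simp

lemma abs_Jn_div_le
    (hp : ∀ (x : S), ∀ a ∈ Adm x, (∀ y, 0 ≤ p x a y) ∧ (∑ y, p x a y) = 1)
    (hlam : 0 < lam) {M : ℝ} (hM : ∀ s a, |C s a| ≤ M) (hM0 : 0 ≤ M)
    (π : Policy S A Adm) (z : S) (n : ℕ) :
    |Jn Adm p C lam π z n / n| ≤ M := by
  rcases Nat.eq_zero_or_pos n with h0 | hpos
  · subst h0; simpa using hM0
  · have hn : (0:ℝ) < n := by exact_mod_cast hpos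
    rw [abs_div, abs_of_pos hn, div_le_iff₀ hn]
    calc |Jn Adm p C lam π z n| ≤ (n : ℝ) * M := abs_Jn_le Adm p C lam hp hlam hM π z n
      _ = M * n := by ring

lemma Javg_bounds
    (hp : ∀ (x : S), ∀ a ∈ Adm x, (∀ y, 0 ≤ p x a y) ∧ (∑ y, p x a y) = 1)
    (hlam : 0 < lam) {M : ℝ} (hM : ∀ s a, |C s a| ≤ M) (hM0 : 0 ≤ M)
    (π : Policy S A Adm) (z : S) :
    -M ≤ Javg Adm p C lam π z ∧ Javg Adm p C lam π z ≤ M := by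
  have habs : ∀ n : ℕ, |Jn Adm p C lam π z n / n| ≤ M :=
    abs_Jn_div_le Adm p C lam hp hlam hM hM0 π z
  constructor
  · refine Filter.le_limsup_of_frequently_le ?_ ?_
    · exact (Filter.Eventually.of_forall fun n => (abs_le.1 (habs n)).1).frequently
    · exact Filter.isBoundedUnder_of ⟨M, fun n => (abs_le.1 (habs n)).2⟩
  · refine Filter.limsup_le_of_le ?_ ?_
    · exact Filter.isCoboundedUnder_le_of_le Filter.atTop fun n => (abs_le.1 (habs n)).1
    · exact Filter.Eventually.of_forall fun n => (abs_le.1 (habs n)).2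

end Bounds

section Key

lemma Jopt_le_Javg
    (hA : ∀ x, (Adm x).Nonempty)
    (hp : ∀ (x : S), ∀ a ∈ Adm x, (∀ y, 0 ≤ p x a y) ∧ (∑ y, p x a y) = 1)
    (hlam : 0 < lam) {M : ℝ} (hM : ∀ s a, |C s a| ≤ M) (hM0 : 0 ≤ M)
    (π : Policy S A Adm) (z : S) :
    Jopt Adm p C lam z ≤ Javg Adm p C lam π z := by
  refine ciInf_le ⟨-M, ?_⟩ π
  rintro r ⟨ρ, rfl⟩
  exact (Javg_bounds Adm p C lam hp hlam hM hM0 ρ z).1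

lemma Jopt_lastState_le
    (hA : ∀ x, (Adm x).Nonempty)
    (hp : ∀ (x : S), ∀ a ∈ Adm x, (∀ y, 0 ≤ p x a y) ∧ (∑ y, p x a y) = 1)
    (hlam : 0 < lam) (x : S) (π : Policy S A Adm) {m : ℕ}
    (u : Fin m → A × S) (hq : 0 < pathProb Adm p π x (List.ofFn u)) :
    Jopt Adm p C lam (lastState x (List.ofFn u)) ≤ Javg Adm p C lam π x := by
  classical
  -- a uniform bound on the cost
  obtain ⟨a0, _⟩ := hA x
  obtain ⟨M, hM⟩ : ∃ M : ℝ, ∀ s a, |C s a| ≤ M := by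
    refine ⟨Finset.univ.sup' ⟨(x, a0), Finset.mem_univ _⟩ fun sa : S × A => |C sa.1 sa.2|,
      fun s a => ?_⟩
    exact Finset.le_sup' (fun sa : S × A => |C sa.1 sa.2|) (Finset.mem_univ (s, a))
  have hM0 : 0 ≤ M := (abs_nonneg _).trans (hM x a0)
  set pre : List (S × A) := histOf x (List.ofFn u) with hpre
  set y : S := lastState x (List.ofFn u) with hy
  set π' : Policy S A Adm := shiftPolicy Adm π pre with hπ'
  set cu : ℝ := costSum C x (List.ofFn u) with hcu
  set c : ℝ := pathProb Adm p π x (List.ofFn u) * Real.exp (lam * cu) with hc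
  have hcpos : 0 < c := mul_pos hq (Real.exp_pos _)
  set K : ℝ := (1 / lam) * Real.log c with hK
  -- the basic decomposition of the expectation
  have hdecomp : ∀ {n : ℕ} (w : Fin n → A × S),
      pathProb Adm p π x (List.ofFn u ++ List.ofFn w) *
          Real.exp (lam * costSum C x (List.ofFn u ++ List.ofFn w))
        = c * (pathProb Adm p π' y (List.ofFn w) *
            Real.exp (lam * costSum C y (List.ofFn w))) := by
    intro n w
    have hs := pathProbAux_shift Adm p π pre (List.ofFn w) [] y
    rw [List.append_nil] at hs
    show pathProbAux Adm p π [] x (List.ofFn u ++ List.ofFn w) * _ = _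
    rw [pathProbAux_append Adm p π (List.ofFn u) (List.ofFn w) [] x,
      List.nil_append, costSum_append C (List.ofFn u) (List.ofFn w) x, ← hy, ← hpre, ← hs]
    show pathProb Adm p π x (List.ofFn u) * pathProb Adm p π' y (List.ofFn w) * _ = _
    rw [mul_add, Real.exp_add, hc, hcu]
    ring
  -- the expectation splits
  have hstep : ∀ n : ℕ, c * Eexp Adm p C lam π' y n ≤ Eexp Adm p C lam π x (m + n) := by
    intro n
    have hE : ∑ uw : (Fin m → A × S) × (Fin n → A × S),
        (pathProb Adm p π x (List.ofFn uw.1 ++ List.ofFn uw.2) *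
          Real.exp (lam * costSum C x (List.ofFn uw.1 ++ List.ofFn uw.2)))
        = ∑ v : Fin (m + n) → A × S,
            pathProb Adm p π x (List.ofFn v) * Real.exp (lam * costSum C x (List.ofFn v)) := by
      refine Fintype.sum_equiv (Fin.appendEquiv m n) _ _ fun uw => by
        have h1 : (Fin.appendEquiv m n) uw = Fin.append uw.1 uw.2 := rfl
        rw [h1, List.ofFn_fin_append]
    calc c * Eexp Adm p C lam π' y n
        = ∑ w : Fin n → A × S,
            pathProb Adm p π x (List.ofFn u ++ List.ofFn w) *
              Real.exp (lam * costSum C x (List.ofFn u ++ List.ofFn w)) := by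
          rw [Eexp, Finset.mul_sum]
          exact Finset.sum_congr rfl fun w _ => (hdecomp w).symm
      _ ≤ ∑ u' : Fin m → A × S, ∑ w : Fin n → A × S,
            pathProb Adm p π x (List.ofFn u' ++ List.ofFn w) *
              Real.exp (lam * costSum C x (List.ofFn u' ++ List.ofFn w)) := by
          refine Finset.single_le_sum (f := fun u' : Fin m → A × S =>
            ∑ w : Fin n → A × S,
              pathProb Adm p π x (List.ofFn u' ++ List.ofFn w) *
                Real.exp (lam * costSum C x (List.ofFn u' ++ List.ofFn w)))
            (fun u' _ => Finset.sum_nonneg fun w _ => mul_nonneg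
              (pathProbAux_nonneg Adm p hp π _ [] x) (Real.exp_pos _).le)
            (Finset.mem_univ u)
      _ = Eexp Adm p C lam π x (m + n) := by rw [Eexp, ← hE, Fintype.sum_prod_type]
  -- hence an inequality between the `Jn`'s
  have hJn : ∀ n : ℕ, K + Jn Adm p C lam π' y n ≤ Jn Adm p C lam π x (n + m) := by
    intro n
    have hE'pos := Eexp_pos Adm p C lam hp hlam hM π' y n
    have hEpos := Eexp_pos Adm p C lam hp hlam hM π x (m + n)
    have hlog : Real.log c + Real.log (Eexp Adm p C lam π' y n)
        ≤ Real.log (Eexp Adm p C lam π x (m + n)) := by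
      rw [← Real.log_mul (ne_of_gt hcpos) (ne_of_gt hE'pos)]
      exact Real.log_le_log (mul_pos hcpos hE'pos) (hstep n)
    have := mul_le_mul_of_nonneg_left hlog (by positivity : (0:ℝ) ≤ 1 / lam)
    rw [mul_add] at this
    rw [Nat.add_comm n m]
    rw [Jn_eq_Eexp, Jn_eq_Eexp]
    exact this
  -- limsup comparison
  set a : ℕ → ℝ := fun n => Jn Adm p C lam π x n / n with ha
  set b : ℕ → ℝ := fun n => Jn Adm p C lam π' y n / n with hb
  have ha_abs : ∀ n, |a n| ≤ M := fun n => abs_Jn_div_le Adm p C lam hp hlam hM hM0 π x n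
  have hb_abs : ∀ n, |b n| ≤ M := fun n => abs_Jn_div_le Adm p C lam hp hlam hM hM0 π' y n
  set D : ℝ := (m : ℝ) * M + |K| with hD
  have hstep5 : ∀ n : ℕ, 1 ≤ n → b n ≤ a (n + m) + D / n := by
    intro n hn1
    have hn : (0:ℝ) < n := by exact_mod_cast hn1
    have h4 : Jn Adm p C lam π' y n ≤ Jn Adm p C lam π x (n + m) - K := by
      linarith [hJn n]
    have h5 : b n ≤ (Jn Adm p C lam π x (n + m) - K) / n :=
      (div_le_div_iff_of_pos_right hn).2 h4
    refine h5.trans ?_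
    have hnm : (0:ℝ) < ((n + m : ℕ) : ℝ) := by positivity
    have hJ : Jn Adm p C lam π x (n + m) = a (n + m) * ((n : ℝ) + (m : ℝ)) := by
      rw [ha]
      push_cast
      field_simp
    rw [hJ, div_le_iff₀ hn, add_mul, div_mul_cancel₀ _ (ne_of_gt hn), hD]
    have ht1 : a (n + m) ≤ M := (abs_le.1 (ha_abs (n + m))).2
    have hK1 : -K ≤ |K| := neg_le.mpr (neg_abs_le K)
    have hm0 : (0:ℝ) ≤ (m : ℝ) := Nat.cast_nonneg m
    nlinarith [mul_le_mul_of_nonneg_right ht1 hm0]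
  -- conclude via limsup
  have hmain : Javg Adm p C lam π' y ≤ Javg Adm p C lam π x := by
    have hkey : ∀ η : ℝ, 0 < η →
        Javg Adm p C lam π' y ≤ Javg Adm p C lam π x + η := by
      intro η hη
      have h0 : Filter.Tendsto (fun n : ℕ => D / n) Filter.atTop (nhds 0) :=
        tendsto_const_div_atTop_nhds_zero_nat D
      have h1 : ∀ᶠ n : ℕ in Filter.atTop, D / n < η := h0.eventually_lt_const hη
      have he : ∀ᶠ n : ℕ in Filter.atTop, b n ≤ a (n + m) + η := by
        filter_upwards [h1, Filter.eventually_ge_atTop 1] with n h1n hn1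
        exact (hstep5 n hn1).trans (by linarith)
      have hcb : Filter.IsCoboundedUnder (· ≤ ·) Filter.atTop b :=
        Filter.isCoboundedUnder_le_of_le Filter.atTop fun n => (abs_le.1 (hb_abs n)).1
      have hbd2 : Filter.IsBoundedUnder (· ≤ ·) Filter.atTop fun n : ℕ => a (n + m) :=
        Filter.isBoundedUnder_of ⟨M, fun n => (abs_le.1 (ha_abs (n + m))).2⟩
      have hcb2 : Filter.IsCoboundedUnder (· ≤ ·) Filter.atTop fun n : ℕ => a (n + m) :=
        Filter.isCoboundedUnder_le_of_le Filter.atTop fun n => (abs_le.1 (ha_abs (n + m))).1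
      have hbd : Filter.IsBoundedUnder (· ≤ ·) Filter.atTop fun n : ℕ => a (n + m) + η :=
        Filter.isBoundedUnder_of ⟨M + η, fun n => by linarith [(abs_le.1 (ha_abs (n + m))).2]⟩
      calc Javg Adm p C lam π' y = Filter.limsup b Filter.atTop := rfl
        _ ≤ Filter.limsup (fun n : ℕ => a (n + m) + η) Filter.atTop :=
            Filter.limsup_le_limsup he hcb hbd
        _ = Filter.limsup (fun n : ℕ => a (n + m)) Filter.atTop + η :=
            limsup_add_const Filter.atTop _ η hbd2 hcb2
        _ = Filter.limsup a Filter.atTop + η := by rw [Filter.limsup_nat_add a m]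
        _ = Javg Adm p C lam π x + η := rfl
    by_contra hcon
    push_neg at hcon
    have := hkey ((Javg Adm p C lam π' y - Javg Adm p C lam π x) / 2) (by linarith)
    linarith
  exact (Jopt_le_Javg Adm p C lam hA hp hlam hM hM0 π' y).trans hmain

end Key

/-- under an `ε`-optimal policy at `x`, almost surely
`J*(λ,X_m) ≤ J*(λ,x) + ε` for each `m`. -/
theorem Jopt_dominated_as
    (hA : ∀ x, (Adm x).Nonempty)
    (hp : ∀ (x : S), ∀ a ∈ Adm x, (∀ y, 0 ≤ p x a y) ∧ (∑ y, p x a y) = 1)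
    (hlam : 0 < lam)
    (ε : ℝ) (hε : 0 < ε) (x : S) (π : Policy S A Adm)
    (hopt : EpsOptimalAt Adm p C lam π x ε) (m : ℕ) :
    cylProb Adm p π x m
      (fun v => Jopt Adm p C lam (stateAt x (List.ofFn v) m) ≤
        Jopt Adm p C lam x + ε) = 1 := by
  classical
  unfold cylProb
  have hterm : ∀ v : Fin m → A × S,
      (if Jopt Adm p C lam (stateAt x (List.ofFn v) m) ≤ Jopt Adm p C lam x + ε then
        pathProb Adm p π x (List.ofFn v) else 0) = pathProb Adm p π x (List.ofFn v) := by
    intro v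
    by_cases hEv : Jopt Adm p C lam (stateAt x (List.ofFn v) m) ≤ Jopt Adm p C lam x + ε
    · rw [if_pos hEv]
    · rw [if_neg hEv]
      rcases eq_or_lt_of_le (pathProbAux_nonneg Adm p hp π (List.ofFn v) [] x) with h0 | h0
      · exact h0
      · exfalso
        apply hEv
        rw [stateAt_ofFn]
        exact (Jopt_lastState_le Adm p C lam hA hp hlam x π v h0).trans hopt
  rw [Finset.sum_congr rfl fun v _ => hterm v]
  exact pathProbAux_sum_one Adm p hp π m [] x

end RiskSensitive
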